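/- Let p be an odd prime and define F(n,k) = (84n^2 - 56nk + 4k^2 + 52n - 12k + 5) * (-1)^k * (1/2)_n * (1/2)_{n+k} * (1/2)_{n-k}^2 / (2^{4n} * (1)_n^2 * (1)_{2n-k+1}) and G(n,k) = 64n^2 * (-1)^k * (1/2)_n * (1/2)_{n+k-1} * (1/2)_{n-k}^2 / (2^{4n} * (1)_n^2 * (1)_{2n-k}). Then sum over n = 0 to (p-1)/2 of F(n,0) equals F((p-1)/2, p) plus the sum over k = 1 to p of G((p+1)/2, k). -/

import Mathlib

open Finset

set_option maxHeartbeats 2000000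

/-- Pochhammer symbol `(a)_m` for rational `a` and integer `m`:
`(a)_m = a(a+1)⋯(a+m-1)` for `m ≥ 0`, and `(a)_{-m} = ∏_{j=1}^m 1/(a-j)`. -/
noncomputable def poch (a : ℚ) (m : ℤ) : ℚ :=
  if 0 ≤ m then ∏ i ∈ Finset.range m.toNat, (a + i)
  else ∏ j ∈ Finset.range (-m).toNat, 1 / (a - (j + 1))


lemma poch_succ_nonneg (a : ℚ) {m : ℤ} (h : 0 ≤ m) :
    poch a (m + 1) = poch a m * (a + m) := by
  rw [poch, poch, if_pos (by omega : (0:ℤ) ≤ m + 1), if_pos h]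
  have h1 : (m + 1).toNat = m.toNat + 1 := by omega
  rw [h1, Finset.prod_range_succ]
  congr 1
  rw [← Int.cast_natCast (R := ℚ), Int.toNat_of_nonneg h]

lemma poch_succ_neg (a : ℚ) {m : ℤ} (h : m + 1 ≤ 0) (ha : a + m ≠ 0) :
    poch a (m + 1) = poch a m * (a + m) := by
  rcases eq_or_lt_of_le h with h0 | h0
  · have hm : m = -1 := by omega
    subst hm
    norm_num [poch]
    have ha' : a - 1 ≠ 0 := by
      intro hc; apply ha; push_cast; linarith
    rw [show a + (-1:ℚ) = a - 1 by ring, inv_mul_cancel₀ ha']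
  · rw [poch, poch, if_neg (by omega), if_neg (by omega)]
    have h1 : (-m).toNat = (-(m+1)).toNat + 1 := by omega
    rw [h1, Finset.prod_range_succ]
    have h2 : ((((-(m+1)).toNat : ℕ) : ℚ)) = -(m:ℚ) - 1 := by
      rw [← Int.cast_natCast (R := ℚ), Int.toNat_of_nonneg (by omega)]
      push_cast; ring
    rw [h2]
    have h3 : a - (-(m:ℚ) - 1 + 1) = a + m := by ring
    rw [h3]
    field_simp

lemma poch_half_succ (m : ℤ) :
    poch (1/2) (m + 1) = poch (1/2) m * (1/2 + m) := by
  rcases le_or_gt 0 m with h | h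
  · exact poch_succ_nonneg _ h
  · refine poch_succ_neg _ (by omega) ?_
    intro hc
    have : (m : ℚ) = -(1/2) := by linarith
    have h2 : ((2*m : ℤ) : ℚ) = -1 := by push_cast; linarith
    have : (2*m : ℤ) = -1 := by exact_mod_cast h2
    omega

lemma poch_half_ne_zero (m : ℤ) : poch (1/2) m ≠ 0 := by
  rw [poch]
  split
  · apply Finset.prod_ne_zero_iff.2
    intro i _
    positivity
  · apply Finset.prod_ne_zero_iff.2
    intro j _
    have : (1:ℚ)/2 - ((j:ℚ) + 1) ≠ 0 := by
      have : (0:ℚ) ≤ (j:ℚ) := by positivity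
      intro hc; linarith
    positivity

lemma poch_one_ne_zero {m : ℤ} (h : 0 ≤ m) : poch 1 m ≠ 0 := by
  rw [poch, if_pos h]
  apply Finset.prod_ne_zero_iff.2
  intro i _
  positivity

lemma poch_one_neg {m : ℤ} (h : m < 0) : poch 1 m = 0 := by
  rw [poch, if_neg (by omega)]
  apply Finset.prod_eq_zero (i := 0) (by simp; omega)
  norm_num

lemma poch_zero (a : ℚ) : poch a 0 = 1 := by norm_num [poch]

lemma poch_one_one : poch 1 1 = 1 := by norm_num [poch]

/-- Guillera's WZ-pair function `F`. -/
noncomputable def F (n k : ℤ) : ℚ :=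
  ((84*n^2 - 56*n*k + 4*k^2 + 52*n - 12*k + 5 : ℤ) : ℚ) * (-1 : ℚ)^k *
    poch (1/2) n * poch (1/2) (n + k) * (poch (1/2) (n - k))^2 /
      ((2 : ℚ)^(4*n) * (poch 1 n)^2 * poch 1 (2*n - k + 1))

/-- Guillera's WZ-pair function `G`. -/
noncomputable def G (n k : ℤ) : ℚ :=
  (64 : ℚ) * (n : ℚ)^2 * (-1 : ℚ)^k *
    poch (1/2) n * poch (1/2) (n + k - 1) * (poch (1/2) (n - k))^2 /
      ((2 : ℚ)^(4*n) * (poch 1 n)^2 * poch 1 (2*n - k))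


lemma F_zero {n k : ℤ} (h : 2*n - k + 1 < 0) : F n k = 0 := by
  rw [F, poch_one_neg h, mul_zero, div_zero]

lemma G_zero {n k : ℤ} (h : 2*n - k < 0) : G n k = 0 := by
  rw [G, poch_one_neg h, mul_zero, div_zero]

lemma G_zero' (k : ℤ) : G 0 k = 0 := by
  rw [G]; norm_num

lemma neg_one_zpow_ne (k : ℤ) : ((-1 : ℚ))^k ≠ 0 :=
  zpow_ne_zero _ (by norm_num)

lemma wz (n k : ℤ) (hn : 0 ≤ n) (hk : 0 ≤ k) :
    F n k - F n (k+1) = G (n+1) (k+1) - G n (k+1) := by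
  obtain h | h | h | h : k + 1 ≤ 2*n ∨ k = 2*n ∨ k = 2*n+1 ∨ 2*n+2 ≤ k := by omega
  · -- generic case
    rw [F, F, G, G]
    rw [show n + 1 + (k+1) - 1 = n + k + 1 by ring,
        show n + (k+1) - 1 = n + k by ring,
        show n + (k+1) = n + k + 1 by ring,
        show n + 1 - (k+1) = n - k by ring,
        show n - k = (n - (k+1)) + 1 by ring,
        show 2*(n+1) - (k+1) = 2*n - (k+1) + 1 + 1 by ring,
        show 2*n - k + 1 = 2*n - (k+1) + 1 + 1 by ring]
    rw [poch_half_succ (n+k), poch_half_succ (n - (k+1)), poch_half_succ n,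
        poch_succ_nonneg 1 hn,
        poch_succ_nonneg 1 (by omega : (0:ℤ) ≤ 2*n - (k+1) + 1),
        poch_succ_nonneg 1 (by omega : (0:ℤ) ≤ 2*n - (k+1)),
        zpow_add₀ (by norm_num : (-1:ℚ) ≠ 0) k 1,
        show 4*(n+1) = 4*n + 4 by ring,
        zpow_add₀ (by norm_num : (2:ℚ) ≠ 0) (4*n) 4]
    set A := poch (1/2) n with hA
    set B := poch (1/2) (n+k) with hB
    set C := poch (1/2) (n - (k+1)) with hC
    set D := poch 1 n with hD
    set E := poch 1 (2*n - (k+1)) with hE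
    have hA0 : A ≠ 0 := poch_half_ne_zero n
    have hB0 : B ≠ 0 := poch_half_ne_zero _
    have hC0 : C ≠ 0 := poch_half_ne_zero _
    have hD0 : D ≠ 0 := poch_one_ne_zero hn
    have hE0 : E ≠ 0 := poch_one_ne_zero (by omega)
    have hT0 : (2:ℚ)^(4*n) ≠ 0 := zpow_ne_zero _ (by norm_num)
    have hs0 : ((-1:ℚ))^k ≠ 0 := neg_one_zpow_ne k
    have h24 : (2:ℚ)^(4:ℤ) ≠ 0 := by norm_num
    have h1 : (1:ℚ) ≠ 0 := one_ne_zero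
    have hD2 : D^2 ≠ 0 := pow_ne_zero _ hD0
    have hx1 : (1:ℚ) + ((2*n - (k+1) : ℤ) : ℚ) ≠ 0 := by
      have : ((2*n-k : ℤ) : ℚ) ≠ 0 := Int.cast_ne_zero.2 (by omega)
      push_cast at this ⊢; intro hc; apply this; linarith
    have hx2 : (1:ℚ) + ((2*n - (k+1) + 1 : ℤ) : ℚ) ≠ 0 := by
      have : ((2*n-k+1 : ℤ) : ℚ) ≠ 0 := Int.cast_ne_zero.2 (by omega)
      push_cast at this ⊢; intro hc; apply this; linarith
    have hx3 : (1:ℚ) + (n : ℚ) ≠ 0 := by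
      have : ((n+1 : ℤ) : ℚ) ≠ 0 := Int.cast_ne_zero.2 (by omega)
      push_cast at this ⊢; intro hc; apply this; linarith
    have hDn2 : (D * (1 + (n:ℚ)))^2 ≠ 0 := pow_ne_zero _ (mul_ne_zero hD0 hx3)
    rw [div_sub_div _ _
          (by apply_rules [mul_ne_zero])
          (by apply_rules [mul_ne_zero]),
        div_sub_div _ _
          (by apply_rules [mul_ne_zero])
          (by apply_rules [mul_ne_zero]),
        div_eq_div_iff
          (by apply_rules [mul_ne_zero])
          (by apply_rules [mul_ne_zero])]
    push_cast
    ring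
  · -- k = 2n
    subst h
    rw [show G n (2*n+1) = 0 from G_zero (by omega), sub_zero, F, F, G]
    rw [show n + 1 + (2*n+1) - 1 = 3*n + 1 by ring,
        show n + (2*n+1) = 3*n + 1 by ring,
        show n + 2*n = 3*n by ring,
        show n + 1 - (2*n+1) = (n - (2*n+1)) + 1 by ring,
        show n - 2*n = (n - (2*n+1)) + 1 by ring,
        show 2*n - 2*n + 1 = (1:ℤ) by ring,
        show 2*n - (2*n+1) + 1 = (0:ℤ) by ring,
        show 2*(n+1) - (2*n+1) = (1:ℤ) by ring,
        poch_one_one, poch_zero]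
    rw [poch_half_succ (3*n), poch_half_succ (n - (2*n+1)), poch_half_succ n,
        poch_succ_nonneg 1 hn,
        zpow_add₀ (by norm_num : (-1:ℚ) ≠ 0) (2*n) 1,
        show ((-1:ℚ))^(2*n) = 1 by rw [zpow_mul]; norm_num,
        show 4*(n+1) = 4*n + 4 by ring,
        zpow_add₀ (by norm_num : (2:ℚ) ≠ 0) (4*n) 4]
    set A := poch (1/2) n with hA
    set B := poch (1/2) (3*n) with hB
    set C := poch (1/2) (n - (2*n+1)) with hC
    set D := poch 1 n with hD
    have hA0 : A ≠ 0 := poch_half_ne_zero n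
    have hB0 : B ≠ 0 := poch_half_ne_zero _
    have hC0 : C ≠ 0 := poch_half_ne_zero _
    have hD0 : D ≠ 0 := poch_one_ne_zero hn
    have hT0 : (2:ℚ)^(4*n) ≠ 0 := zpow_ne_zero _ (by norm_num)
    have hx3 : (1:ℚ) + (n : ℚ) ≠ 0 := by
      have : ((n+1 : ℤ) : ℚ) ≠ 0 := Int.cast_ne_zero.2 (by omega)
      push_cast at this ⊢; intro hc; apply this; linarith
    have h24 : (2:ℚ)^(4:ℤ) ≠ 0 := by norm_num
    have h1 : (1:ℚ) ≠ 0 := one_ne_zero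
    have hD2 : D^2 ≠ 0 := pow_ne_zero _ hD0
    have hDn2 : (D * (1 + (n:ℚ)))^2 ≠ 0 := pow_ne_zero _ (mul_ne_zero hD0 hx3)
    rw [div_sub_div _ _
          (by apply_rules [mul_ne_zero])
          (by apply_rules [mul_ne_zero]),
        div_eq_div_iff
          (by apply_rules [mul_ne_zero])
          (by apply_rules [mul_ne_zero])]
    push_cast
    ring
  · -- k = 2n + 1
    subst h
    rw [show F n (2*n+1+1) = 0 from F_zero (by omega),
        show G n (2*n+1+1) = 0 from G_zero (by omega), sub_zero, sub_zero, F, G]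
    rw [show n + 1 + (2*n+1+1) - 1 = (3*n+1) + 1 by ring,
        show n + (2*n+1) = 3*n + 1 by ring,
        show n + 1 - (2*n+1+1) = n - (2*n+1) by ring,
        show 2*n - (2*n+1) + 1 = (0:ℤ) by ring,
        show 2*(n+1) - (2*n+1+1) = (0:ℤ) by ring,
        poch_zero]
    rw [poch_half_succ (3*n+1), poch_half_succ n,
        poch_succ_nonneg 1 hn,
        show ((-1:ℚ))^(2*n+1) = -1 by
          rw [zpow_add₀ (by norm_num : (-1:ℚ) ≠ 0), zpow_mul]; norm_num,
        show (2*n+1+1 : ℤ) = 2*(n+1) by ring,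
        show ((-1:ℚ))^(2*(n+1)) = 1 by rw [zpow_mul]; norm_num,
        show 4*(n+1) = 4*n + 4 by ring,
        zpow_add₀ (by norm_num : (2:ℚ) ≠ 0) (4*n) 4]
    set A := poch (1/2) n with hA
    set B := poch (1/2) (3*n+1) with hB
    set C := poch (1/2) (n - (2*n+1)) with hC
    set D := poch 1 n with hD
    have hA0 : A ≠ 0 := poch_half_ne_zero n
    have hB0 : B ≠ 0 := poch_half_ne_zero _
    have hC0 : C ≠ 0 := poch_half_ne_zero _
    have hD0 : D ≠ 0 := poch_one_ne_zero hn
    have hT0 : (2:ℚ)^(4*n) ≠ 0 := zpow_ne_zero _ (by norm_num)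
    have hx3 : (1:ℚ) + (n : ℚ) ≠ 0 := by
      have : ((n+1 : ℤ) : ℚ) ≠ 0 := Int.cast_ne_zero.2 (by omega)
      push_cast at this ⊢; intro hc; apply this; linarith
    have h24 : (2:ℚ)^(4:ℤ) ≠ 0 := by norm_num
    have h1 : (1:ℚ) ≠ 0 := one_ne_zero
    have hD2 : D^2 ≠ 0 := pow_ne_zero _ hD0
    have hDn2 : (D * (1 + (n:ℚ)))^2 ≠ 0 := pow_ne_zero _ (mul_ne_zero hD0 hx3)
    rw [div_eq_div_iff
          (by apply_rules [mul_ne_zero])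
          (by apply_rules [mul_ne_zero])]
    push_cast
    ring
  · rw [show F n k = 0 from F_zero (by omega),
        show F n (k+1) = 0 from F_zero (by omega),
        show G (n+1) (k+1) = 0 from G_zero (by omega),
        show G n (k+1) = 0 from G_zero (by omega)]

theorem wz_telescoped (p : ℕ) (hp : p.Prime) (hodd : Odd p) :
    ∑ n ∈ Finset.range ((p - 1)/2 + 1), F n 0 =
      F (((p : ℤ) - 1)/2) p + ∑ k ∈ Finset.Icc 1 p, G (((p : ℤ) + 1)/2) k := by
  obtain ⟨m, hm⟩ := hodd
  have hm' : p = 2*m + 1 := by omega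
  subst hm'
  have e1 : (2*m + 1 - 1)/2 + 1 = m + 1 := by omega
  have e2 : (((2*m+1 : ℕ) : ℤ) - 1)/2 = (m : ℤ) := by push_cast; omega
  have e3 : (((2*m+1 : ℕ) : ℤ) + 1)/2 = (m : ℤ) + 1 := by push_cast; omega
  rw [e1, e2, e3]
  have key : ∀ N : ℕ, F (N:ℤ) 0 - F (N:ℤ) ((2*m+1 : ℕ) : ℤ) =
      ∑ k ∈ Finset.range (2*m+1), (G ((N:ℤ)+1) ((k:ℤ)+1) - G (N:ℤ) ((k:ℤ)+1)) := by
    intro N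
    have h := Finset.sum_range_sub' (fun k : ℕ => F (N:ℤ) (k:ℤ)) (2*m+1)
    simp only [Nat.cast_zero] at h
    rw [← h]
    apply Finset.sum_congr rfl
    intro k _
    have hc : ((k+1 : ℕ) : ℤ) = (k:ℤ) + 1 := by push_cast; ring
    rw [hc]
    exact wz (N:ℤ) (k:ℤ) (by positivity) (by positivity)
  have tele : ∑ n ∈ Finset.range (m+1), (F (n:ℤ) 0 - F (n:ℤ) ((2*m+1 : ℕ) : ℤ)) =
      ∑ k ∈ Finset.range (2*m+1), G ((m:ℤ)+1) ((k:ℤ)+1) := by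
    rw [Finset.sum_congr rfl (fun n _ => key n), Finset.sum_comm]
    apply Finset.sum_congr rfl
    intro k _
    have h := Finset.sum_range_sub (fun n : ℕ => G (n:ℤ) ((k:ℤ)+1)) (m+1)
    simp only [Nat.cast_zero] at h
    have h2 : ∑ n ∈ Finset.range (m+1), (G ((n:ℤ)+1) ((k:ℤ)+1) - G (n:ℤ) ((k:ℤ)+1)) =
        G (((m+1 : ℕ)):ℤ) ((k:ℤ)+1) - G 0 ((k:ℤ)+1) := by
      rw [← h]
      apply Finset.sum_congr rfl
      intro n _
      have hc : ((n+1 : ℕ) : ℤ) = (n:ℤ) + 1 := by push_cast; ring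
      rw [hc]
    rw [h2, G_zero', sub_zero]
    norm_cast
  have hFp : ∑ n ∈ Finset.range (m+1), F (n:ℤ) ((2*m+1 : ℕ) : ℤ) = F (m:ℤ) ((2*m+1 : ℕ) : ℤ) := by
    apply Finset.sum_eq_single_of_mem m (Finset.mem_range.2 (by omega))
    intro n hn hne
    apply F_zero
    have h1 : n < m + 1 := Finset.mem_range.1 hn
    push_cast
    omega
  have hIcc : ∑ k ∈ Finset.Icc 1 (2*m+1), G ((m:ℤ)+1) (k:ℤ) =
      ∑ k ∈ Finset.range (2*m+1), G ((m:ℤ)+1) ((k:ℤ)+1) := by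
    rw [← Finset.Ico_add_one_right_eq_Icc, Finset.sum_Ico_eq_sum_range]
    apply Finset.sum_congr (by norm_num)
    intro k hk
    congr 1
    push_cast; ring
  rw [Finset.sum_sub_distrib] at tele
  rw [hFp] at tele
  rw [hIcc]
  linarith [tele]
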